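/- For finite-dimensional Hilbert spaces H and K and a unit vector ψ ∈ H ⊗ K with Schmidt coefficients (pᵢ), the greatest cross norm of the projection P_ψ equals (∑ᵢ √pᵢ)². -/

import Mathlib

open scoped BigOperators ComplexOrder
open Matrix

noncomputable section

/-- Finite-dimensional complex Hilbert space of dimension `m`. -/
abbrev H (m : ℕ) := EuclideanSpace ℂ (Fin m)

/-- The tensor product `H m ⊗ H n`, realized as `EuclideanSpace ℂ (Fin m × Fin n)`. -/
abbrev HT (m n : ℕ) := EuclideanSpace ℂ (Fin m × Fin n)

/-- Elementary tensor `a ⊗ b`. -/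
def tensorVec {m n : ℕ} (a : H m) (b : H n) : HT m n :=
  WithLp.toLp 2 fun p => a p.1 * b p.2

/-- The projection `|ψ⟩⟨ψ|` as a matrix. -/
def proj {m n : ℕ} (ψ : HT m n) : Matrix (Fin m × Fin n) (Fin m × Fin n) ℂ :=
  Matrix.of fun x y => ψ x * (starRingEnd ℂ) (ψ y)

/-- The projection `|a⟩⟨a|` on a single factor. -/
def proj1 {m : ℕ} (a : H m) : Matrix (Fin m) (Fin m) ℂ :=
  Matrix.of fun i j => a i * (starRingEnd ℂ) (a j)

/-- Partial trace over the second factor. -/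
def ptrace2 {m n : ℕ} (M : Matrix (Fin m × Fin n) (Fin m × Fin n) ℂ) :
    Matrix (Fin m) (Fin m) ℂ :=
  Matrix.of fun i j => ∑ k : Fin n, M (i, k) (j, k)

/-- Partial trace over the first factor. -/
def ptrace1 {m n : ℕ} (M : Matrix (Fin m × Fin n) (Fin m × Fin n) ℂ) :
    Matrix (Fin n) (Fin n) ℂ :=
  Matrix.of fun i j => ∑ k : Fin m, M (k, i) (k, j)

/-- Von Neumann entropy `-Tr(ρ ln ρ)` of a Hermitian matrix, via its eigenvalues. -/
def vnEnt {k : ℕ} {M : Matrix (Fin k) (Fin k) ℂ} (h : M.IsHermitian) : ℝ :=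
  ∑ i, Real.negMulLog (h.eigenvalues i)

/-- Kronecker product of square matrices. -/
def kron {m n : ℕ} (A : Matrix (Fin m) (Fin m) ℂ) (B : Matrix (Fin n) (Fin n) ℂ) :
    Matrix (Fin m × Fin n) (Fin m × Fin n) ℂ :=
  Matrix.of fun p q => A p.1 q.1 * B p.2 q.2

/-- Action of a matrix on a vector. -/
def matVec {m n : ℕ} (M : Matrix (Fin m × Fin n) (Fin m × Fin n) ℂ) (ψ : HT m n) :
    HT m n := WithLp.toLp 2 fun p => ∑ q, M p q * ψ q

/-- The canonical pure state with Schmidt coefficients `μ`. -/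
def stdVec {k : ℕ} (μ : Fin k → ℝ) : HT k k :=
  WithLp.toLp 2 fun p => if p.1 = p.2 then (Real.sqrt (μ p.1) : ℂ) else 0

/-- Strong Schmidt orthogonality: the supports of both reduced density matrices
are orthogonal. -/
def SchmidtOrthogonal {m n : ℕ} (ψ φ : HT m n) : Prop :=
  ptrace2 (proj ψ) * ptrace2 (proj φ) = 0 ∧ ptrace1 (proj ψ) * ptrace1 (proj φ) = 0

/-- Image of `ψ` under the tensor product of two isometric embeddings. -/
def tensorMap {m n m' n' : ℕ} (f : H m →ₗᵢ[ℂ] H m') (g : H n →ₗᵢ[ℂ] H n')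
    (ψ : HT m n) : HT m' n' :=
  WithLp.toLp 2 fun p => ∑ q : Fin m × Fin n,
    ψ q * f (EuclideanSpace.single q.1 1) p.1 * g (EuclideanSpace.single q.2 1) p.2

/-- Finite probability distribution. -/
def IsProbDist {k : ℕ} (p : Fin k → ℝ) : Prop := (∀ i, 0 ≤ p i) ∧ ∑ i, p i = 1

/-- Multiset of nonzero Schmidt coefficients of `ψ` (eigenvalues of the reduced
density matrix). -/
def schmidtMultiset {m n : ℕ} (ψ : HT m n) (h : (ptrace2 (proj ψ)).IsHermitian) :
    Multiset ℝ :=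
  (Finset.univ.val.map h.eigenvalues).filter (· ≠ 0)

/-- Trace norm of a matrix. -/
def trNorm {a b : ℕ} (A : Matrix (Fin a) (Fin b) ℂ) : ℝ :=
  ∑ i, Real.sqrt ((Matrix.posSemidef_conjTranspose_mul_self A).1.eigenvalues i)

/-- The greatest cross norm. -/
def gcn {m n : ℕ} (M : Matrix (Fin m × Fin n) (Fin m × Fin n) ℂ) : ℝ :=
  sInf { t : ℝ | ∃ (k : ℕ) (x : Fin k → Matrix (Fin m) (Fin m) ℂ)
    (y : Fin k → Matrix (Fin n) (Fin n) ℂ),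
    M = ∑ i, kron (x i) (y i) ∧ t = ∑ i, trNorm (x i) * trNorm (y i) }

/-- Density operator. -/
def IsDensity {d : Type*} [Fintype d] [DecidableEq d] (M : Matrix d d ℂ) : Prop :=
  M.PosSemidef ∧ M.trace = 1


/-! ### Auxiliary lemmas for `gcn_of_pure_state` -/

lemma herm_trace_eq {d : ℕ} {M : Matrix (Fin d) (Fin d) ℂ} (h : M.IsHermitian) :
    M.trace = ∑ i, (h.eigenvalues i : ℂ) := by
  nth_rewrite 1 [h.spectral_theorem]
  rw [Unitary.conjStarAlgAut_apply, Matrix.trace_mul_comm, ← mul_assoc]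
  rw [show (star (h.eigenvectorUnitary : Matrix (Fin d) (Fin d) ℂ)) *
      (h.eigenvectorUnitary : Matrix (Fin d) (Fin d) ℂ) = 1 from
    Matrix.mem_unitaryGroup_iff'.mp h.eigenvectorUnitary.2]
  rw [one_mul, Matrix.trace_diagonal]
  rfl

lemma sum_sqrt_eig {d : ℕ} {M : Matrix (Fin d) (Fin d) ℂ} (h : M.IsHermitian)
    (t : ℝ) (ht : 0 ≤ t) (hMM : M * M = (t : ℂ) • M) (htr : M.trace = (t : ℂ)) :
    ∑ i, Real.sqrt (h.eigenvalues i) = Real.sqrt t := by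
  set U : Matrix (Fin d) (Fin d) ℂ := (h.eigenvectorUnitary : Matrix (Fin d) (Fin d) ℂ) with hU
  set D : Matrix (Fin d) (Fin d) ℂ := diagonal (RCLike.ofReal ∘ h.eigenvalues) with hD
  have hsU : star U * U = 1 := Matrix.mem_unitaryGroup_iff'.mp h.eigenvectorUnitary.2
  have hUs : U * star U = 1 := Matrix.mem_unitaryGroup_iff.mp h.eigenvectorUnitary.2
  have hdiag : star U * M * U = D := by
    have := h.conjStarAlgAut_star_eigenvectorUnitary
    rwa [Unitary.conjStarAlgAut_star_apply] at this
  have hDD : D * D = (t : ℂ) • D := by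
    rw [← hdiag]
    calc star U * M * U * (star U * M * U)
        = star U * (M * (U * star U) * M) * U := by noncomm_ring
      _ = star U * (M * M) * U := by rw [hUs, mul_one]
      _ = star U * ((t : ℂ) • M) * U := by rw [hMM]
      _ = (t : ℂ) • (star U * M * U) := by rw [Matrix.mul_smul, Matrix.smul_mul]
  have heig : ∀ i, h.eigenvalues i * h.eigenvalues i = t * h.eigenvalues i := by
    intro i
    have h2 := congrFun (congrFun hDD i) i
    simp only [hD, Matrix.diagonal_mul_diagonal, Matrix.smul_apply, Matrix.diagonal_apply_eq,
      Function.comp_apply, smul_eq_mul] at h2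
    have h5 : ((h.eigenvalues i * h.eigenvalues i : ℝ) : ℂ) = ((t * h.eigenvalues i : ℝ) : ℂ) := by
      push_cast; exact h2
    exact_mod_cast h5
  have hsum : ∑ i, h.eigenvalues i = t := by
    have h3 := (herm_trace_eq h).symm.trans htr
    have h4 : ((∑ i, h.eigenvalues i : ℝ) : ℂ) = ((t : ℝ) : ℂ) := by push_cast; exact h3
    exact_mod_cast h4
  have hsqrt : ∀ i, Real.sqrt (h.eigenvalues i) * Real.sqrt t = h.eigenvalues i := by
    intro i
    rcases eq_or_ne (h.eigenvalues i) 0 with h0 | h0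
    · simp [h0]
    · have : h.eigenvalues i = t := mul_right_cancel₀ h0 (heig i)
      rw [this, Real.mul_self_sqrt ht]
  rcases eq_or_lt_of_le ht with ht0 | ht0
  · have : ∀ i, h.eigenvalues i = 0 := by
      intro i
      have := heig i
      rw [← ht0, zero_mul] at this
      exact mul_self_eq_zero.mp this
    simp [this, ← ht0]
  · have hst : Real.sqrt t ≠ 0 := by positivity
    have hts : (∑ i, Real.sqrt (h.eigenvalues i)) * Real.sqrt t = t := by
      rw [Finset.sum_mul]
      simp only [hsqrt]
      exact hsum
    rw [eq_div_of_mul_eq hst hts, Real.div_sqrt]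

/-- Rank-one matrix `|u⟩⟨v|`. -/
def outerM {m m' : ℕ} (u : H m) (v : H m') : Matrix (Fin m) (Fin m') ℂ :=
  Matrix.of fun i j => u i * (starRingEnd ℂ) (v j)

def nsq {m : ℕ} (u : H m) : ℝ := ∑ i, Complex.normSq (u i)

lemma nsq_nonneg {m : ℕ} (u : H m) : 0 ≤ nsq u :=
  Finset.sum_nonneg fun i _ => Complex.normSq_nonneg _

lemma norm_euc {m : ℕ} (u : H m) : ‖u‖ = Real.sqrt (nsq u) := by
  rw [EuclideanSpace.norm_eq]
  congr 1
  exact Finset.sum_congr rfl fun i _ => by rw [Complex.sq_norm]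

lemma conjTranspose_outerM_mul {m m' : ℕ} (u : H m) (v : H m') :
    (outerM u v)ᴴ * outerM u v =
      Matrix.of fun i j => ((nsq u : ℝ) : ℂ) * (v i * (starRingEnd ℂ) (v j)) := by
  ext i j
  simp only [Matrix.mul_apply, Matrix.conjTranspose_apply, outerM, Matrix.of_apply]
  have hpt : ∀ x : Fin m, star (u x * (starRingEnd ℂ) (v i)) * (u x * (starRingEnd ℂ) (v j)) =
      ((Complex.normSq (u x) : ℝ) : ℂ) * (v i * (starRingEnd ℂ) (v j)) := by
    intro x
    simp only [Complex.star_def, map_mul (starRingEnd ℂ), Complex.normSq_eq_conj_mul_self,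
      RingHomCompTriple.comp_apply, RingHom.id_apply, Complex.conj_conj]
    ring
  rw [Finset.sum_congr rfl fun x _ => hpt x, ← Finset.sum_mul, nsq, Complex.ofReal_sum]

lemma trNorm_outerM {m m' : ℕ} (u : H m) (v : H m') :
    trNorm (outerM u v) = ‖u‖ * ‖v‖ := by
  have hkey := sum_sqrt_eig (Matrix.posSemidef_conjTranspose_mul_self (outerM u v)).1
    (nsq u * nsq v) (mul_nonneg (nsq_nonneg u) (nsq_nonneg v)) ?_ ?_
  · rw [trNorm, hkey, Real.sqrt_mul (nsq_nonneg u), norm_euc, norm_euc]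
  · rw [conjTranspose_outerM_mul]
    ext i j
    simp only [Matrix.mul_apply, Matrix.of_apply, Matrix.smul_apply, smul_eq_mul]
    have hpt : ∀ x : Fin m', ((nsq u : ℝ) : ℂ) * (v i * (starRingEnd ℂ) (v x)) *
        (((nsq u : ℝ) : ℂ) * (v x * (starRingEnd ℂ) (v j))) =
        ((nsq u : ℝ) : ℂ) * ((Complex.normSq (v x) : ℝ) : ℂ) *
          (((nsq u : ℝ) : ℂ) * (v i * (starRingEnd ℂ) (v j))) := by
      intro x
      simp only [Complex.normSq_eq_conj_mul_self]
      ring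
    rw [Finset.sum_congr rfl fun x _ => hpt x]
    push_cast [nsq]
    rw [← Finset.sum_mul, ← Finset.mul_sum]
  · rw [conjTranspose_outerM_mul, Matrix.trace]
    simp only [Matrix.diag_apply, Matrix.of_apply]
    have hpt : ∀ x : Fin m', ((nsq u : ℝ) : ℂ) * (v x * (starRingEnd ℂ) (v x)) =
        ((nsq u : ℝ) : ℂ) * ((Complex.normSq (v x) : ℝ) : ℂ) := by
      intro x
      simp only [Complex.normSq_eq_conj_mul_self]; ring
    rw [Finset.sum_congr rfl fun x _ => hpt x]
    push_cast [nsq]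
    rw [← Finset.mul_sum]

def frobSq {a b : ℕ} (A : Matrix (Fin a) (Fin b) ℂ) : ℝ :=
  ∑ i, ∑ j, Complex.normSq (A i j)

lemma sqrt_add_le' (x y : ℝ) (hx : 0 ≤ x) (hy : 0 ≤ y) :
    Real.sqrt (x + y) ≤ Real.sqrt x + Real.sqrt y := by
  have h : x + y ≤ (Real.sqrt x + Real.sqrt y) ^ 2 := by
    rw [add_sq, Real.sq_sqrt hx, Real.sq_sqrt hy]
    nlinarith [Real.sqrt_nonneg x, Real.sqrt_nonneg y]
  calc Real.sqrt (x + y) ≤ Real.sqrt ((Real.sqrt x + Real.sqrt y) ^ 2) := Real.sqrt_le_sqrt h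
    _ = Real.sqrt x + Real.sqrt y := Real.sqrt_sq (by positivity)

lemma sqrt_sum_le' {ι : Type*} (s : Finset ι) (f : ι → ℝ) (hf : ∀ i ∈ s, 0 ≤ f i) :
    Real.sqrt (∑ i ∈ s, f i) ≤ ∑ i ∈ s, Real.sqrt (f i) := by
  classical
  induction s using Finset.induction_on with
  | empty => simp
  | insert a s hni ih =>
    rw [Finset.sum_insert hni, Finset.sum_insert hni]
    calc Real.sqrt (f a + ∑ i ∈ s, f i)
        ≤ Real.sqrt (f a) + Real.sqrt (∑ i ∈ s, f i) :=
          sqrt_add_le' _ _ (hf a (Finset.mem_insert_self a s))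
            (Finset.sum_nonneg fun i hi => hf i (Finset.mem_insert_of_mem hi))
      _ ≤ Real.sqrt (f a) + ∑ i ∈ s, Real.sqrt (f i) := by
          gcongr
          exact ih fun i hi => hf i (Finset.mem_insert_of_mem hi)

lemma trNorm_nonneg {a b : ℕ} (A : Matrix (Fin a) (Fin b) ℂ) : 0 ≤ trNorm A :=
  Finset.sum_nonneg fun _ _ => Real.sqrt_nonneg _

lemma trace_conjTranspose_mul {a b : ℕ} (A : Matrix (Fin a) (Fin b) ℂ) :
    (Aᴴ * A).trace = ((frobSq A : ℝ) : ℂ) := by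
  rw [Matrix.trace]
  simp only [Matrix.diag_apply, Matrix.mul_apply, Matrix.conjTranspose_apply]
  rw [frobSq, Complex.ofReal_sum]
  rw [Finset.sum_comm]
  refine Finset.sum_congr rfl fun i _ => ?_
  rw [Complex.ofReal_sum]
  refine Finset.sum_congr rfl fun j _ => ?_
  rw [Complex.normSq_eq_conj_mul_self]
  rfl

lemma sqrt_frobSq_le_trNorm {a b : ℕ} (A : Matrix (Fin a) (Fin b) ℂ) :
    Real.sqrt (frobSq A) ≤ trNorm A := by
  have h := Matrix.posSemidef_conjTranspose_mul_self A
  have hsum : ∑ i, h.1.eigenvalues i = frobSq A := by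
    have h1 := (herm_trace_eq h.1).symm.trans (trace_conjTranspose_mul A)
    have h2 : ((∑ i, h.1.eigenvalues i : ℝ) : ℂ) = ((frobSq A : ℝ) : ℂ) := by
      push_cast; exact h1
    exact_mod_cast h2
  calc Real.sqrt (frobSq A) = Real.sqrt (∑ i, h.1.eigenvalues i) := by rw [hsum]
    _ ≤ ∑ i, Real.sqrt (h.1.eigenvalues i) :=
        sqrt_sum_le' _ _ fun i _ => h.eigenvalues_nonneg i
    _ = trNorm A := rfl

lemma normSq_eq_norm_sq (z : ℂ) : Complex.normSq z = ‖z‖ ^ 2 := by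
  rw [Complex.sq_norm]

lemma norm_sq_euc {m : ℕ} (u : H m) : ‖u‖ ^ 2 = ∑ i, Complex.normSq (u i) := by
  rw [EuclideanSpace.norm_eq, Real.sq_sqrt (Finset.sum_nonneg fun i _ => sq_nonneg _)]
  exact Finset.sum_congr rfl fun i _ => (normSq_eq_norm_sq _).symm

lemma inner_euc' {m : Type*} [Fintype m] (u v : EuclideanSpace ℂ m) :
    (inner ℂ u v : ℂ) = ∑ i, (starRingEnd ℂ) (u i) * v i := by
  rw [PiLp.inner_apply]; simp only [RCLike.inner_apply, mul_comm]

lemma sandwich_le_frobSq {m k : ℕ} (a : Fin k → H m) (ha : Orthonormal ℂ a)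
    (x : Matrix (Fin m) (Fin m) ℂ) :
    ∑ i, ∑ j, Complex.normSq (∑ s, ∑ t, (starRingEnd ℂ) (a i s) * x s t * a j t)
      ≤ frobSq x := by
  set w : Fin k → H m := fun j => WithLp.toLp 2 (fun s => ∑ t, x s t * a j t) with hw
  have hinner : ∀ i j, (∑ s, ∑ t, (starRingEnd ℂ) (a i s) * x s t * a j t)
      = (inner ℂ (a i) (w j) : ℂ) := by
    intro i j
    rw [inner_euc']
    refine Finset.sum_congr rfl fun s _ => ?_
    rw [hw]
    simp only
    rw [Finset.mul_sum]
    exact Finset.sum_congr rfl fun t _ => by ring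
  have step1 : ∀ j, ∑ i, Complex.normSq ((inner ℂ (a i) (w j) : ℂ)) ≤ ‖w j‖ ^ 2 := by
    intro j
    have hb := ha.sum_inner_products_le (𝕜 := ℂ) (s := Finset.univ) (w j)
    calc ∑ i, Complex.normSq ((inner ℂ (a i) (w j) : ℂ))
        = ∑ i, ‖(inner ℂ (a i) (w j) : ℂ)‖ ^ 2 :=
          Finset.sum_congr rfl fun i _ => normSq_eq_norm_sq _
      _ ≤ ‖w j‖ ^ 2 := hb
  set c : Fin m → H m := fun s => WithLp.toLp 2 (fun t => (starRingEnd ℂ) (x s t)) with hc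
  have hws : ∀ j s, w j s = (inner ℂ (c s) (a j) : ℂ) := by
    intro j s
    rw [inner_euc', hw, hc]
    simp only
    exact Finset.sum_congr rfl fun t _ => by rw [Complex.conj_conj]
  have step2 : ∀ s, ∑ j, Complex.normSq ((inner ℂ (c s) (a j) : ℂ))
      ≤ ∑ t, Complex.normSq (x s t) := by
    intro s
    have hb := ha.sum_inner_products_le (𝕜 := ℂ) (s := Finset.univ) (c s)
    calc ∑ j, Complex.normSq ((inner ℂ (c s) (a j) : ℂ))
        = ∑ j, ‖(inner ℂ (a j) (c s) : ℂ)‖ ^ 2 := by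
          refine Finset.sum_congr rfl fun j _ => ?_
          rw [normSq_eq_norm_sq, ← norm_inner_symm]
      _ ≤ ‖c s‖ ^ 2 := hb
      _ = ∑ t, Complex.normSq (x s t) := by
          rw [norm_sq_euc]
          exact Finset.sum_congr rfl fun t _ => by rw [hc]; simp [Complex.normSq_conj]
  calc ∑ i, ∑ j, Complex.normSq (∑ s, ∑ t, (starRingEnd ℂ) (a i s) * x s t * a j t)
      = ∑ j, ∑ i, Complex.normSq ((inner ℂ (a i) (w j) : ℂ)) := by
        rw [Finset.sum_comm]
        exact Finset.sum_congr rfl fun j _ => Finset.sum_congr rfl fun i _ => by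
          rw [hinner]
    _ ≤ ∑ j, ‖w j‖ ^ 2 := Finset.sum_le_sum fun j _ => step1 j
    _ = ∑ j, ∑ s, Complex.normSq ((inner ℂ (c s) (a j) : ℂ)) := by
        refine Finset.sum_congr rfl fun j _ => ?_
        rw [norm_sq_euc]
        exact Finset.sum_congr rfl fun s _ => by rw [hws]
    _ = ∑ s, ∑ j, Complex.normSq ((inner ℂ (c s) (a j) : ℂ)) := Finset.sum_comm
    _ ≤ ∑ s, ∑ t, Complex.normSq (x s t) := Finset.sum_le_sum fun s _ => step2 s
    _ = frobSq x := rfl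

lemma abs_sum_mul_le {ι : Type*} [Fintype ι] (A B : ι → ℂ) :
    ‖∑ i, A i * B i‖ ≤
      Real.sqrt (∑ i, Complex.normSq (A i)) * Real.sqrt (∑ i, Complex.normSq (B i)) := by
  classical
  set u : EuclideanSpace ℂ ι := WithLp.toLp 2 fun i => (starRingEnd ℂ) (A i) with hu
  set v : EuclideanSpace ℂ ι := WithLp.toLp 2 B with hv
  have h1 : (inner ℂ u v : ℂ) = ∑ i, A i * B i := by
    rw [PiLp.inner_apply]
    exact Finset.sum_congr rfl fun i _ => by
      simp only [hu, hv, RCLike.inner_apply]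
      rw [Complex.conj_conj, mul_comm]
  have h2 := norm_inner_le_norm (𝕜 := ℂ) u v
  rw [h1] at h2
  have hptA : ∀ i, ‖u i‖ * ‖u i‖ = Complex.normSq (A i) := by
    intro i
    simp only [hu]
    rw [RCLike.norm_conj, ← sq, Complex.sq_norm]
  have hun : ‖u‖ = Real.sqrt (∑ i, Complex.normSq (A i)) := by
    rw [EuclideanSpace.norm_eq]
    congr 1
    exact Finset.sum_congr rfl fun i _ => by rw [sq]; exact hptA i
  have hvn : ‖v‖ = Real.sqrt (∑ i, Complex.normSq (B i)) := by
    rw [EuclideanSpace.norm_eq]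
    congr 1
    exact Finset.sum_congr rfl fun i _ => by
      rw [sq]
      simp only [hv]
      rw [← sq, Complex.sq_norm]
  rw [← hun, ← hvn]
  exact h2

lemma euc_sum_apply {ι κ : Type*} [Fintype ι] (s : Finset κ) (f : κ → EuclideanSpace ℂ ι)
    (P : ι) : (∑ i ∈ s, f i) P = ∑ i ∈ s, f i P := by
  classical
  induction s using Finset.cons_induction with
  | empty => rfl
  | cons a s ha ih => rw [Finset.sum_cons, Finset.sum_cons, PiLp.add_apply, ih]

lemma sum_factor {α β γ δ : Type*} [Fintype α] [Fintype β] [Fintype γ] [Fintype δ]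
    (F : α → γ → ℂ) (G : β → δ → ℂ) :
    ∑ p : α × β, ∑ q : γ × δ, F p.1 q.1 * G p.2 q.2 =
      (∑ s, ∑ u, F s u) * (∑ t, ∑ v, G t v) := by
  simp only [Fintype.sum_prod_type]
  rw [Finset.sum_mul_sum Finset.univ Finset.univ (fun s => ∑ u, F s u)
    (fun t => ∑ v, G t v)]
  refine Finset.sum_congr rfl fun s _ => Finset.sum_congr rfl fun t _ => ?_
  rw [Finset.sum_mul_sum Finset.univ Finset.univ (fun u => F s u) (fun v => G t v)]

lemma inner_tensorVec {m n : ℕ} (a a' : H m) (b b' : H n) :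
    (inner ℂ (tensorVec a b) (tensorVec a' b') : ℂ) = (inner ℂ a a' : ℂ) * (inner ℂ b b' : ℂ) := by
  rw [inner_euc', inner_euc', inner_euc',
    Finset.sum_mul_sum Finset.univ Finset.univ (fun s => (starRingEnd ℂ) (a s) * a' s)
      (fun t => (starRingEnd ℂ) (b t) * b' t)]
  rw [Fintype.sum_prod_type]
  refine Finset.sum_congr rfl fun s _ => Finset.sum_congr rfl fun t _ => ?_
  simp only [tensorVec, _root_.map_mul]
  ring

/-- The greatest cross norm of a pure state projection equals `(∑ √pᵢ)²` in terms
of the Schmidt coefficients. -/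
theorem gcn_of_pure_state {m n k : ℕ} (ψ : HT m n) (hψ : ‖ψ‖ = 1)
    (p : Fin k → ℝ) (a : Fin k → H m) (b : Fin k → H n)
    (ha : Orthonormal ℂ a) (hb : Orthonormal ℂ b) (hp : ∀ i, 0 ≤ p i)
    (hdecomp : ψ = ∑ i, (Real.sqrt (p i) : ℂ) • tensorVec (a i) (b i)) :
    gcn (proj ψ) = (∑ i, Real.sqrt (p i)) ^ 2 := by
  classical
  have hc0 : 0 ≤ ∑ i, Real.sqrt (p i) := Finset.sum_nonneg fun i _ => Real.sqrt_nonneg _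
  set c : ℝ := ∑ i, Real.sqrt (p i) with hc
  set T : Fin k → HT m n := fun i => tensorVec (a i) (b i) with hT
  have hTT : ∀ i j, (inner ℂ (T i) (T j) : ℂ) = if i = j then 1 else 0 := by
    intro i j
    simp only [hT]
    rw [inner_tensorVec, orthonormal_iff_ite.mp ha, orthonormal_iff_ite.mp hb]
    rcases eq_or_ne i j with rfl | hij
    · simp
    · simp [hij]
  have hTψ : ∀ i, (inner ℂ (T i) ψ : ℂ) = ((Real.sqrt (p i) : ℝ) : ℂ) := by
    intro i
    rw [hdecomp]
    rw [inner_sum]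
    rw [Finset.sum_congr rfl fun j _ => by rw [inner_smul_right, hTT i j]]
    simp
  have hinner1 : ∀ i, (∑ P, (starRingEnd ℂ) (T i P) * ψ P) = ((Real.sqrt (p i) : ℝ) : ℂ) := by
    intro i
    rw [← inner_euc', hTψ]
  set F : Matrix (Fin m × Fin n) (Fin m × Fin n) ℂ → ℂ := fun σ =>
    ∑ i, ∑ j, ∑ P, ∑ Q, (starRingEnd ℂ) (T i P) * σ P Q * T j Q with hF
  have hFadd : ∀ σ τ, F (σ + τ) = F σ + F τ := by
    intro σ τ
    simp only [hF, Matrix.add_apply, mul_add, add_mul, Finset.sum_add_distrib]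
  have hF0 : F 0 = 0 := by simp [hF]
  have hFsum : ∀ {K : ℕ} (s : Finset (Fin K))
      (σ : Fin K → Matrix (Fin m × Fin n) (Fin m × Fin n) ℂ),
      F (∑ r ∈ s, σ r) = ∑ r ∈ s, F (σ r) := by
    intro K s σ
    induction s using Finset.cons_induction with
    | empty => simpa using hF0
    | cons r s hr ih => rw [Finset.sum_cons, Finset.sum_cons, hFadd, ih]
  have hFproj : F (proj ψ) = ((c : ℝ) : ℂ) * ((c : ℝ) : ℂ) := by
    have hij : ∀ i j, (∑ P, ∑ Q, (starRingEnd ℂ) (T i P) * proj ψ P Q * T j Q)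
        = ((Real.sqrt (p i) : ℝ) : ℂ) * ((Real.sqrt (p j) : ℝ) : ℂ) := by
      intro i j
      have hpt : ∀ (P Q : Fin m × Fin n), (starRingEnd ℂ) (T i P) * proj ψ P Q * T j Q
          = ((starRingEnd ℂ) (T i P) * ψ P) * ((starRingEnd ℂ) (ψ Q) * T j Q) := by
        intro P Q
        simp only [proj, Matrix.of_apply]
        ring
      rw [Finset.sum_congr rfl fun P _ => Finset.sum_congr rfl fun Q _ => hpt P Q]
      rw [← Finset.sum_mul_sum Finset.univ Finset.univ
        (fun P => (starRingEnd ℂ) (T i P) * ψ P) (fun Q => (starRingEnd ℂ) (ψ Q) * T j Q)]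
      rw [hinner1 i]
      have h4 : (∑ Q, (starRingEnd ℂ) (ψ Q) * T j Q)
          = (starRingEnd ℂ) (∑ Q, (starRingEnd ℂ) (T j Q) * ψ Q) := by
        rw [map_sum]
        exact Finset.sum_congr rfl fun Q _ => by
          rw [_root_.map_mul, Complex.conj_conj]; ring
      rw [h4, hinner1 j, Complex.conj_ofReal]
    simp only [hF]
    rw [Finset.sum_congr rfl fun i _ => Finset.sum_congr rfl fun j _ => hij i j]
    rw [← Finset.sum_mul_sum Finset.univ Finset.univ
      (fun i => ((Real.sqrt (p i) : ℝ) : ℂ)) (fun j => ((Real.sqrt (p j) : ℝ) : ℂ))]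
    rw [hc, Complex.ofReal_sum]
  have hFkron : ∀ (x : Matrix (Fin m) (Fin m) ℂ) (y : Matrix (Fin n) (Fin n) ℂ) (i j : Fin k),
      (∑ P, ∑ Q, (starRingEnd ℂ) (T i P) * kron x y P Q * T j Q)
      = (∑ s, ∑ u, (starRingEnd ℂ) (a i s) * x s u * a j u)
        * (∑ t, ∑ v, (starRingEnd ℂ) (b i t) * y t v * b j v) := by
    intro x y i j
    rw [← sum_factor (fun s u => (starRingEnd ℂ) (a i s) * x s u * a j u)
      (fun t v => (starRingEnd ℂ) (b i t) * y t v * b j v)]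
    refine Finset.sum_congr rfl fun P _ => Finset.sum_congr rfl fun Q _ => ?_
    simp only [hT, tensorVec, kron, Matrix.of_apply, _root_.map_mul]
    ring
  have hbound : ∀ (x : Matrix (Fin m) (Fin m) ℂ) (y : Matrix (Fin n) (Fin n) ℂ),
      ‖F (kron x y)‖ ≤ trNorm x * trNorm y := by
    intro x y
    set A : Fin k × Fin k → ℂ :=
      fun z => ∑ s, ∑ u, (starRingEnd ℂ) (a z.1 s) * x s u * a z.2 u with hA
    set B : Fin k × Fin k → ℂ :=
      fun z => ∑ t, ∑ v, (starRingEnd ℂ) (b z.1 t) * y t v * b z.2 v with hB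
    have h1 : F (kron x y) = ∑ z : Fin k × Fin k, A z * B z := by
      simp only [hF]
      rw [Fintype.sum_prod_type]
      exact Finset.sum_congr rfl fun i _ => Finset.sum_congr rfl fun j _ => hFkron x y i j
    rw [h1]
    calc ‖∑ z : Fin k × Fin k, A z * B z‖
        = ‖∑ z : Fin k × Fin k, A z * B z‖ := rfl
      _ ≤ Real.sqrt (∑ z, Complex.normSq (A z)) * Real.sqrt (∑ z, Complex.normSq (B z)) :=
          abs_sum_mul_le A B
      _ ≤ trNorm x * trNorm y := by
          have hxx : Real.sqrt (∑ z, Complex.normSq (A z)) ≤ trNorm x := by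
            calc Real.sqrt (∑ z, Complex.normSq (A z))
                = Real.sqrt (∑ i, ∑ j, Complex.normSq (A (i, j))) := by
                  rw [Fintype.sum_prod_type]
              _ ≤ Real.sqrt (frobSq x) := Real.sqrt_le_sqrt (sandwich_le_frobSq a ha x)
              _ ≤ trNorm x := sqrt_frobSq_le_trNorm x
          have hyy : Real.sqrt (∑ z, Complex.normSq (B z)) ≤ trNorm y := by
            calc Real.sqrt (∑ z, Complex.normSq (B z))
                = Real.sqrt (∑ i, ∑ j, Complex.normSq (B (i, j))) := by
                  rw [Fintype.sum_prod_type]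
              _ ≤ Real.sqrt (frobSq y) := Real.sqrt_le_sqrt (sandwich_le_frobSq b hb y)
              _ ≤ trNorm y := sqrt_frobSq_le_trNorm y
          exact mul_le_mul hxx hyy (Real.sqrt_nonneg _) (trNorm_nonneg x)
  have hψap : ∀ P, ψ P = ∑ i, ((Real.sqrt (p i) : ℝ) : ℂ) * T i P := by
    intro P
    rw [hdecomp, euc_sum_apply]
    exact Finset.sum_congr rfl fun i _ => by rw [PiLp.smul_apply, smul_eq_mul]
  -- Membership of c ^ 2 in the defining set
  have hmem : c ^ 2 ∈ { t : ℝ | ∃ (K : ℕ) (x : Fin K → Matrix (Fin m) (Fin m) ℂ)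
      (y : Fin K → Matrix (Fin n) (Fin n) ℂ),
      proj ψ = ∑ i, kron (x i) (y i) ∧ t = ∑ i, trNorm (x i) * trNorm (y i) } := by
    refine ⟨k * k,
      fun e => outerM
        (((Real.sqrt (p (finProdFinEquiv.symm e).1) * Real.sqrt (p (finProdFinEquiv.symm e).2)
          : ℝ) : ℂ) • a (finProdFinEquiv.symm e).1) (a (finProdFinEquiv.symm e).2),
      fun e => outerM (b (finProdFinEquiv.symm e).1) (b (finProdFinEquiv.symm e).2), ?_, ?_⟩
    · ext P Q
      rw [Matrix.sum_apply]
      rw [show (∑ e : Fin (k * k),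
          kron (outerM (((Real.sqrt (p (finProdFinEquiv.symm e).1) *
              Real.sqrt (p (finProdFinEquiv.symm e).2) : ℝ) : ℂ) •
              a (finProdFinEquiv.symm e).1) (a (finProdFinEquiv.symm e).2))
            (outerM (b (finProdFinEquiv.symm e).1) (b (finProdFinEquiv.symm e).2)) P Q)
          = ∑ z : Fin k × Fin k,
          kron (outerM (((Real.sqrt (p z.1) * Real.sqrt (p z.2) : ℝ) : ℂ) • a z.1) (a z.2))
            (outerM (b z.1) (b z.2)) P Q from
        Equiv.sum_comp finProdFinEquiv.symm (fun z =>
          kron (outerM (((Real.sqrt (p z.1) * Real.sqrt (p z.2) : ℝ) : ℂ) • a z.1) (a z.2))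
            (outerM (b z.1) (b z.2)) P Q)]
      simp only [proj, Matrix.of_apply]
      rw [hψap P, hψap Q, map_sum, Finset.sum_mul_sum Finset.univ Finset.univ
        (fun i => ((Real.sqrt (p i) : ℝ) : ℂ) * T i P)
        (fun j => (starRingEnd ℂ) (((Real.sqrt (p j) : ℝ) : ℂ) * T j Q))]
      rw [Fintype.sum_prod_type]
      refine Finset.sum_congr rfl fun i _ => Finset.sum_congr rfl fun j _ => ?_
      simp only [hT, tensorVec, kron, outerM, Matrix.of_apply, PiLp.smul_apply, smul_eq_mul,
        _root_.map_mul, Complex.conj_ofReal]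
      push_cast
      ring
    · have h5 : ∀ z : Fin k × Fin k,
          trNorm (outerM (((Real.sqrt (p z.1) * Real.sqrt (p z.2) : ℝ) : ℂ) • a z.1) (a z.2)) *
            trNorm (outerM (b z.1) (b z.2))
          = Real.sqrt (p z.1) * Real.sqrt (p z.2) := by
        intro z
        rw [trNorm_outerM, trNorm_outerM, norm_smul, ha.1 z.1, ha.1 z.2, hb.1 z.1, hb.1 z.2]
        rw [Complex.norm_real, Real.norm_eq_abs,
          abs_of_nonneg (mul_nonneg (Real.sqrt_nonneg _) (Real.sqrt_nonneg _))]
        ring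
      rw [show (∑ e : Fin (k * k),
          trNorm (outerM (((Real.sqrt (p (finProdFinEquiv.symm e).1) *
              Real.sqrt (p (finProdFinEquiv.symm e).2) : ℝ) : ℂ) •
              a (finProdFinEquiv.symm e).1) (a (finProdFinEquiv.symm e).2)) *
            trNorm (outerM (b (finProdFinEquiv.symm e).1) (b (finProdFinEquiv.symm e).2)))
          = ∑ z : Fin k × Fin k,
          trNorm (outerM (((Real.sqrt (p z.1) * Real.sqrt (p z.2) : ℝ) : ℂ) • a z.1) (a z.2)) *
            trNorm (outerM (b z.1) (b z.2)) from
        Equiv.sum_comp finProdFinEquiv.symm (fun z : Fin k × Fin k =>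
          trNorm (outerM (((Real.sqrt (p z.1) * Real.sqrt (p z.2) : ℝ) : ℂ) • a z.1) (a z.2)) *
            trNorm (outerM (b z.1) (b z.2)))]
      rw [Finset.sum_congr rfl fun z _ => h5 z]
      rw [Fintype.sum_prod_type]
      rw [← Finset.sum_mul_sum Finset.univ Finset.univ
        (fun i => Real.sqrt (p i)) (fun j => Real.sqrt (p j))]
      rw [← hc, sq]
  -- The lower bound
  have hlow : ∀ t ∈ { t : ℝ | ∃ (K : ℕ) (x : Fin K → Matrix (Fin m) (Fin m) ℂ)
      (y : Fin K → Matrix (Fin n) (Fin n) ℂ),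
      proj ψ = ∑ i, kron (x i) (y i) ∧ t = ∑ i, trNorm (x i) * trNorm (y i) },
      c ^ 2 ≤ t := by
    rintro t ⟨K, x, y, hMx, rfl⟩
    have e1 : F (proj ψ) = ∑ r, F (kron (x r) (y r)) := by
      rw [hMx, hFsum]
    have e2 : c ^ 2 = ‖F (proj ψ)‖ := by
      rw [hFproj, ← Complex.ofReal_mul, Complex.norm_real, Real.norm_eq_abs,
        abs_of_nonneg (mul_nonneg hc0 hc0), sq]
    calc c ^ 2 = ‖F (proj ψ)‖ := e2
      _ = ‖∑ r, F (kron (x r) (y r))‖ := by rw [e1]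
      _ ≤ ∑ r, ‖F (kron (x r) (y r))‖ := norm_sum_le _ _
      _ ≤ ∑ r, trNorm (x r) * trNorm (y r) := Finset.sum_le_sum fun r _ => hbound (x r) (y r)
  rw [gcn]
  exact le_antisymm (csInf_le ⟨c ^ 2, fun t ht => hlow t ht⟩ hmem) (le_csInf ⟨_, hmem⟩ hlow)


end
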